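/- In the height-balancing algorithm, the final Height of the root equals the sum over the unique root-to-leaf path through any leaf of (Head(n)+1) for all nodes n on that path; in particular, after balancing, this sum is the same for every leaf of the tree. -/
import Mathlib


/-- Abstract syntax trees: each node carries a label (its base latency `l(n)`, which
after the balancing algorithm becomes its `Head`). -/
inductive AST : Type
  | leaf : ℕ → AST
  | unary : ℕ → AST → AST
  | binary : ℕ → AST → AST → AST

/-- Add `δ` to the label (Head) of the root node. -/
def AST.addRoot : AST → ℕ → AST
  | .leaf l, δ => .leaf (l + δ)
  | .unary l c, δ => .unary (l + δ) c
  | .binary l c₁ c₂, δ => .binary (l + δ) c₁ c₂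

/-- Height of a (Head-annotated) tree: `Head(n) + 1` plus the maximum height of its
children (0 for a leaf). -/
def AST.height : AST → ℕ
  | .leaf l => l + 1
  | .unary l c => l + 1 + c.height
  | .binary l c₁ c₂ => l + 1 + max c₁.height c₂.height

/-- `ComputeHead`: bottom-up height balancing. Returns the Head-annotated tree together
with its height. For a leaf, `Head = l` and height `l + 1`; for a unary node,
`Head = l` and height `l + 1 + Height(child)`; for a binary node, the Head of the root
of the shorter subtree is increased by the height difference, and the height is
`l + 1 +` the common subtree height. -/
def computeHead : AST → AST × ℕ
  | .leaf l => (.leaf l, l + 1)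
  | .unary l c =>
    let (c', h) := computeHead c
    (.unary l c', l + 1 + h)
  | .binary l c₁ c₂ =>
    let (c₁', h₁) := computeHead c₁
    let (c₂', h₂) := computeHead c₂
    if h₁ ≤ h₂ then (.binary l (c₁'.addRoot (h₂ - h₁)) c₂', l + 1 + h₂)
    else (.binary l c₁' (c₂'.addRoot (h₁ - h₂)), l + 1 + h₁)

/-- All node labels are at least 1 (`l(n) ≥ 1`). -/
def AST.allGEOne : AST → Prop
  | .leaf l => 1 ≤ l
  | .unary l c => 1 ≤ l ∧ c.allGEOne
  | .binary l c₁ c₂ => 1 ≤ l ∧ c₁.allGEOne ∧ c₂.allGEOne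

/-- For each leaf `f` of the tree, the sum over the root-to-`f` path of `Head(n) + 1`;
one entry of the list per leaf, in left-to-right order. -/
def AST.pathSums : AST → List ℕ
  | .leaf l => [l + 1]
  | .unary l c => c.pathSums.map (· + (l + 1))
  | .binary l c₁ c₂ => (c₁.pathSums ++ c₂.pathSums).map (· + (l + 1))

lemma AST.addRoot_pathSums (T : AST) (δ : ℕ) :
    (T.addRoot δ).pathSums = T.pathSums.map (· + δ) := by
  cases T with
  | leaf l => simp [AST.addRoot, AST.pathSums, Nat.add_right_comm, Nat.add_assoc]
  | unary l c =>
      simp [AST.addRoot, AST.pathSums, List.map_map, Function.comp]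
      intro _ _; omega
  | binary l c₁ c₂ =>
      simp [AST.addRoot, AST.pathSums, List.map_map, Function.comp]
      rw [show l + δ + 1 = l + 1 + δ from by omega]

lemma AST.addRoot_height (T : AST) (δ : ℕ) :
    (T.addRoot δ).height = T.height + δ := by
  cases T <;> simp [AST.addRoot, AST.height] <;> omega

lemma computeHead_snd (T : AST) : (computeHead T).2 = (computeHead T).1.height := by
  induction T with
  | leaf l => simp [computeHead, AST.height]
  | unary l c ih => simp [computeHead, AST.height, ih]
  | binary l c₁ c₂ ih₁ ih₂ =>
      simp only [computeHead]
      split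
      · next h =>
          simp [AST.height, AST.addRoot_height, ← ih₁, ← ih₂]
          omega
      · next h =>
          simp [AST.height, AST.addRoot_height, ← ih₁, ← ih₂]
          omega

theorem computeHead_pathSums' (T : AST) :
    ∀ s ∈ (computeHead T).1.pathSums, s = (computeHead T).1.height := by
  induction T with
  | leaf l => simp [computeHead, AST.pathSums, AST.height]
  | unary l c ih =>
      simp only [computeHead, AST.pathSums, AST.height, List.mem_map]
      rintro s ⟨x, hx, rfl⟩
      have := ih x hx
      have h2 := computeHead_snd c
      omega
  | binary l c₁ c₂ ih₁ ih₂ =>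
      simp only [computeHead]
      have h1 := computeHead_snd c₁
      have h2 := computeHead_snd c₂
      split
      · next h =>
          simp only [AST.pathSums, AST.height, AST.addRoot_pathSums,
            AST.addRoot_height, List.map_append, List.map_map, List.mem_append,
            List.mem_map, Function.comp]
          rintro s (⟨x, hx, rfl⟩ | ⟨x, hx, rfl⟩)
          · have := ih₁ x hx; omega
          · have := ih₂ x hx; omega
      · next h =>
          simp only [AST.pathSums, AST.height, AST.addRoot_pathSums,
            AST.addRoot_height, List.map_append, List.map_map, List.mem_append,
            List.mem_map, Function.comp]
          rintro s (⟨x, hx, rfl⟩ | ⟨x, hx, rfl⟩)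
          · have := ih₁ x hx; omega
          · have := ih₂ x hx; omega

/-- After the height-balancing algorithm, the Height of the root equals the sum of
`Head(n) + 1` over the root-to-leaf path, for every leaf of the tree; in particular
this sum is the same for all leaves. -/
theorem computeHead_pathSums (T : AST) (hT : T.allGEOne) :
    ∀ s ∈ (computeHead T).1.pathSums, s = (computeHead T).1.height := by
  exact computeHead_pathSums' T
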